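/- With the notation of the previous statement (τ > 0, D₃ = (E·D_y + C)·F·[[τI,0],[0,I]]), if D₃ + D₃ᵀ is positive semidefinite then Q_j = (v_D)_{jj}(i_Q)_{jj} − (v_Q)_{jj}(i_D)_{jj} = 0 for every j. -/

import Mathlib

open Matrix

lemma psd_diag_nonneg {m : Type*} [Fintype m] [DecidableEq m]
    {A : Matrix m m ℝ} (h : A.PosSemidef) (i : m) : 0 ≤ A i i := by
  exact h.diag_nonneg

theorem modelIII_posSemidef_implies_zero_reactive_power (n : ℕ)
    (vD vQ iD iQ D₁ : Matrix (Fin n) (Fin n) ℝ) (τ : ℝ) (hτ : 0 < τ)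
    (hvD : vD.IsDiag) (hvQ : vQ.IsDiag) (hiD : iD.IsDiag) (hiQ : iQ.IsDiag)
    (hD₁ : D₁ᵀ = D₁)
    (D₂ D₃ : Matrix (Fin n ⊕ Fin n) (Fin n ⊕ Fin n) ℝ)
    (hD₂ : D₂ = (fromBlocks vD vQ (-vQ) vD * fromBlocks D₁ 0 0 D₁
        + fromBlocks iD iQ iQ (-iD)) * fromBlocks vQ vD (-vD) vQ)
    (hD₃ : D₃ = D₂ * fromBlocks (τ • (1 : Matrix (Fin n) (Fin n) ℝ)) 0 0 1)
    (hpsd : (D₃ + D₃ᵀ).PosSemidef) :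
    ∀ j : Fin n, vD j j * iQ j j - vQ j j * iD j j = 0 := by
  intro j
  rw [← hvD.diagonal_diag, ← hvQ.diagonal_diag, ← hiD.diagonal_diag, ← hiQ.diagonal_diag] at hD₂ ⊢
  have h1 := psd_diag_nonneg hpsd (Sum.inl j)
  have h2 := psd_diag_nonneg hpsd (Sum.inr j)
  rw [hD₃, hD₂] at h1 h2
  simp only [Matrix.add_apply, Matrix.transpose_apply, fromBlocks_multiply,
    Matrix.add_mul, Matrix.mul_add, Matrix.neg_mul, Matrix.mul_neg, Matrix.mul_zero,
    Matrix.zero_mul, Matrix.mul_one, Matrix.mul_smul, Matrix.smul_mul, add_zero, zero_add,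
    Matrix.fromBlocks_apply₁₁, Matrix.fromBlocks_apply₂₂, Matrix.diagonal_mul,
    Matrix.mul_diagonal, Matrix.diagonal_apply_eq, Matrix.smul_apply, Matrix.neg_apply,
    Matrix.mul_assoc, smul_eq_mul, Matrix.diag_apply] at h1 h2
  simp only [Matrix.diagonal_apply_eq, Matrix.diag_apply] at *
  nlinarith [h1, h2, hτ]
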